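/- Let (V,g) be a finite-dimensional real vector space with a nondegenerate symmetric bilinear form, and let A be a symmetric bilinear form on V of rank 2. Then A⁴ = (1/2)( (tr(A²)+tr(A)²)·A² + tr(A)(tr(A²) − tr(A)²)·A ), where Aᵖ is the bilinear form associated to the p-th power of the g-associated endomorphism of A. -/

import Mathlib

variable {V : Type*} [AddCommGroup V] [Module ℝ V]

/-- Kulkarni–Nomizu product of two (0,2)-tensors. -/
def kn (A B : V → V → ℝ) : V → V → V → V → ℝ := fun x1 x2 x3 x4 =>
  A x1 x4 * B x2 x3 + A x2 x3 * B x1 x4 - A x1 x3 * B x2 x4 - A x2 x4 * B x1 x3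

/-- The endomorphism `(X ∧_A Y)Z = A(Y,Z)X − A(X,Z)Y`. -/
def wedgeV (A : V → V → ℝ) (x y z : V) : V := A y z • x - A x z • y

/-- Tachibana tensor `Q(A,T)` of a (0,2)-tensor `A` and a (0,4)-tensor `T`. -/
def Q4 (A : V → V → ℝ) (T : V → V → V → V → ℝ) : V → V → V → V → V → V → ℝ :=
  fun x1 x2 x3 x4 x y =>
    -(T (wedgeV A x y x1) x2 x3 x4) - T x1 (wedgeV A x y x2) x3 x4
      - T x1 x2 (wedgeV A x y x3) x4 - T x1 x2 x3 (wedgeV A x y x4)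

/-- Cayley–Hamilton for `2 × 2` real matrices. -/
lemma ch2 (M : Matrix (Fin 2) (Fin 2) ℝ) :
    M * M = M.trace • M - M.det • (1 : Matrix (Fin 2) (Fin 2) ℝ) := by
  ext i j
  fin_cases i <;> fin_cases j <;>
    simp [Matrix.mul_apply, Matrix.det_fin_two, Matrix.trace_fin_two, Fin.sum_univ_two,
      Matrix.one_apply] <;> ring

lemma det2 (M : Matrix (Fin 2) (Fin 2) ℝ) :
    M.det = (M.trace ^ 2 - (M * M).trace) / 2 := by
  simp [Matrix.mul_apply, Matrix.det_fin_two, Matrix.trace_fin_two, Fin.sum_univ_two]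
  ring

/-- if `rank A = 2` then
`A⁴ = (1/2)((tr(A²)+tr(A)²)·A² + tr(A)(tr(A²) − tr(A)²)·A)`. -/
theorem stmt_7 {V : Type*} [AddCommGroup V] [Module ℝ V] [FiniteDimensional ℝ V]
    (g A : V →ₗ[ℝ] V →ₗ[ℝ] ℝ)
    (hg : ∀ x y, g x y = g y x)
    (hgnd : ∀ x : V, (∀ y : V, g x y = 0) → x = 0)
    (hA : ∀ x y, A x y = A y x)
    (a : V →ₗ[ℝ] V) (ha : ∀ x y, g (a x) y = A x y)
    (hrank : Module.finrank ℝ (LinearMap.range a) = 2) :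
    ∀ x y : V,
      A (a (a (a x))) y
        = (1/2 : ℝ) * ((LinearMap.trace ℝ V (a ∘ₗ a) + (LinearMap.trace ℝ V a) ^ 2) * A (a x) y
            + LinearMap.trace ℝ V a
              * (LinearMap.trace ℝ V (a ∘ₗ a) - (LinearMap.trace ℝ V a) ^ 2) * A x y) := by
  intro x y
  set W : Submodule ℝ V := LinearMap.range a with hW
  have hmem : ∀ v : V, a v ∈ W := fun v => LinearMap.mem_range_self a v
  have hmaps : Set.MapsTo a W W := fun v _ => hmem v
  set b : W →ₗ[ℝ] W := a.restrict hmaps with hb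
  set t : ℝ := LinearMap.trace ℝ V a with htdef
  set s : ℝ := LinearMap.trace ℝ V (a ∘ₗ a) with hsdef
  -- traces agree with restriction
  have ht : LinearMap.trace ℝ W b = t :=
    LinearMap.trace_restrict_eq_of_forall_mem W a hmem
  have ht2 : LinearMap.trace ℝ W (b ∘ₗ b) = s := by
    rw [← LinearMap.restrict_comp hmaps hmaps]
    exact LinearMap.trace_restrict_eq_of_forall_mem W (a ∘ₗ a) (fun v => hmem _)
  -- Cayley–Hamilton on W
  have : FiniteDimensional ℝ W := inferInstance
  let B : Module.Basis (Fin 2) ℝ W := Module.finBasisOfFinrankEq ℝ W hrank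
  set M : Matrix (Fin 2) (Fin 2) ℝ := LinearMap.toMatrix B B b with hM
  have hMtr : M.trace = t := by
    rw [← ht, LinearMap.trace_eq_matrix_trace ℝ B b]
  have hM2tr : (M * M).trace = s := by
    rw [← ht2, LinearMap.trace_eq_matrix_trace ℝ B (b ∘ₗ b), LinearMap.toMatrix_comp B B B]
  set d : ℝ := (t ^ 2 - s) / 2 with hd
  have hdet : M.det = d := by rw [det2, hMtr, hM2tr]
  have hbb : b ∘ₗ b = t • b - d • LinearMap.id := by
    apply (LinearMap.toMatrix B B).injective
    rw [LinearMap.toMatrix_comp B B B]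
    simp only [map_sub, map_smul, LinearMap.toMatrix_id, ← hM]
    rw [ch2, hMtr, hdet]
  -- pointwise identity on V: a³ v = t • a² v − d • a v
  have h3 : ∀ v : V, a (a (a v)) = t • a (a v) - d • a v := by
    intro v
    have hv := LinearMap.congr_fun hbb ⟨a v, hmem v⟩
    have := congrArg Subtype.val hv
    exact this
  have key2 : A (a (a x)) y = t * A (a x) y - d * A x y := by
    rw [← ha, h3 x]
    simp only [map_sub, map_smul, LinearMap.sub_apply, LinearMap.smul_apply, smul_eq_mul]
    rw [ha, ha]
  calc A (a (a (a x))) y = t * A (a (a x)) y - d * A (a x) y := by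
        rw [h3 x]
        simp only [map_sub, map_smul, LinearMap.sub_apply, LinearMap.smul_apply, smul_eq_mul]
    _ = t * (t * A (a x) y - d * A x y) - d * A (a x) y := by rw [key2]
    _ = (1/2 : ℝ) * ((s + t ^ 2) * A (a x) y + t * (s - t ^ 2) * A x y) := by
        rw [hd]; ring
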